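/- Suppose L is a linear operator on polynomials, λₙ are pairwise distinct scalars, and (φₙ) is a basis of monic-up-to-sign polynomials of degree n such that L φₙ = λₙ φₙ + νₙ φₙ₋₁. Then for each n there exists a unique polynomial Pₙ of degree n with leading coefficient equal to that of a prescribed normalization, satisfying L Pₙ = λₙ Pₙ, and its expansion coefficients Aₙₛ in Pₙ = Σ_{s=0}^{n} Aₙₛ φₛ satisfy A_{n,s+1} = Aₙₛ(λₙ-λₛ)/ν_{s+1}, hence Aₙₛ = A_{n0} ∏_{j=0}^{s-1}(λₙ-λⱼ)/∏_{j=1}^{s} νⱼ (assuming νⱼ ≠ 0 for 1 ≤ j ≤ n). -/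

import Mathlib

open Polynomial Finset


lemma deg_sum_lt (φ : ℕ → Polynomial ℝ) (hdeg : ∀ k, (φ k).degree = k)
    (n : ℕ) (A : ℕ → ℝ) :
    (∑ s ∈ range n, A s • φ s).degree < (n : WithBot ℕ) := by
  apply lt_of_le_of_lt (degree_sum_le _ _)
  rw [Finset.sup_lt_iff (by exact_mod_cast WithBot.bot_lt_coe n)]
  intro s hs
  apply lt_of_le_of_lt (degree_smul_le _ _)
  rw [hdeg s]
  exact_mod_cast mem_range.mp hs

lemma indep (φ : ℕ → Polynomial ℝ) (hdeg : ∀ k, (φ k).degree = k) :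
    ∀ n (A : ℕ → ℝ), ∑ s ∈ range n, A s • φ s = 0 → ∀ s < n, A s = 0 := by
  intro n
  induction n with
  | zero => intro A _ s hs; omega
  | succ n ih =>
    intro A h s hs
    have hAn : A n = 0 := by
      by_contra hA
      have h1 : (∑ s ∈ range n, A s • φ s) = -(A n • φ n) := by
        rw [Finset.sum_range_succ] at h
        linear_combination (norm := abel) h
      have h2 : (-(A n • φ n)).degree = (n : WithBot ℕ) := by
        rw [degree_neg, smul_eq_C_mul, degree_mul, degree_C hA, hdeg n, zero_add]
      have := deg_sum_lt φ hdeg n A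
      rw [h1, h2] at this
      exact lt_irrefl _ this
    rcases Nat.lt_succ_iff_lt_or_eq.mp hs with h' | h'
    · apply ih A _ s h'
      rw [Finset.sum_range_succ, hAn, zero_smul, add_zero] at h
      exact h
    · rw [h']; exact hAn

lemma coeff_top (φ : ℕ → Polynomial ℝ) (hdeg : ∀ k, (φ k).degree = k)
    (n : ℕ) (A : ℕ → ℝ) :
    (∑ s ∈ range (n+1), A s • φ s).coeff n = A n * (φ n).coeff n := by
  rw [Finset.sum_range_succ, Polynomial.coeff_add, Polynomial.coeff_smul, smul_eq_mul]
  have : (∑ s ∈ range n, A s • φ s).coeff n = 0 := by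
    apply coeff_eq_zero_of_degree_lt
    exact deg_sum_lt φ hdeg n A
  rw [this, zero_add]

lemma span_aux (φ : ℕ → Polynomial ℝ) (hdeg : ∀ k, (φ k).degree = k) :
    ∀ (n : ℕ) (P : Polynomial ℝ), P.degree ≤ (n : WithBot ℕ) →
      ∃ A : ℕ → ℝ, P = ∑ s ∈ range (n+1), A s • φ s := by
  intro n
  induction n with
  | zero =>
    intro P hP
    have hc : (φ 0).coeff 0 ≠ 0 := Polynomial.coeff_ne_zero_of_eq_degree (hdeg 0)
    have hφ : φ 0 = C ((φ 0).coeff 0) := Polynomial.eq_C_of_degree_le_zero (le_of_eq (hdeg 0))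
    refine ⟨fun _ => P.coeff 0 / (φ 0).coeff 0, ?_⟩
    rw [Finset.sum_range_one]
    calc P = C (P.coeff 0) := Polynomial.eq_C_of_degree_le_zero hP
    _ = (P.coeff 0 / (φ 0).coeff 0) • C ((φ 0).coeff 0) := by
        rw [smul_C, smul_eq_mul, div_mul_cancel₀ _ hc]
    _ = _ := by rw [← hφ]
  | succ n ih =>
    intro P hP
    set c := P.coeff (n+1) / (φ (n+1)).coeff (n+1) with hc
    have hφc : (φ (n+1)).coeff (n+1) ≠ 0 := Polynomial.coeff_ne_zero_of_eq_degree (hdeg (n+1))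
    have hQ : (P - c • φ (n+1)).degree ≤ (n : WithBot ℕ) := by
      rw [Polynomial.degree_le_iff_coeff_zero]
      intro m hm
      have hm' : n + 1 ≤ m := by exact_mod_cast Nat.add_one_le_iff.mpr (by exact_mod_cast hm)
      rw [Polynomial.coeff_sub, Polynomial.coeff_smul, smul_eq_mul]
      rcases eq_or_lt_of_le hm' with h | h
      · rw [← h, hc, div_mul_cancel₀ _ hφc, sub_self]
      · have h1 : P.coeff m = 0 := by
          apply coeff_eq_zero_of_degree_lt
          exact lt_of_le_of_lt hP (by exact_mod_cast h)
        have h2 : (φ (n+1)).coeff m = 0 := by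
          apply coeff_eq_zero_of_degree_lt
          rw [hdeg]; exact_mod_cast h
        rw [h1, h2, mul_zero, sub_zero]
    obtain ⟨A, hA⟩ := ih _ hQ
    refine ⟨fun s => if s = n+1 then c else A s, ?_⟩
    rw [Finset.sum_range_succ]
    simp only
    rw [if_pos trivial]
    have : ∑ s ∈ range (n+1), (if s = n+1 then c else A s) • φ s
        = ∑ s ∈ range (n+1), A s • φ s := by
      apply Finset.sum_congr rfl
      intro s hs
      have : s ≠ n+1 := by have := mem_range.mp hs; omega
      rw [if_neg this]
    rw [this, ← hA]
    abel

lemma key (L : Polynomial ℝ →ₗ[ℝ] Polynomial ℝ) (lam nu : ℕ → ℝ)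
    (φ : ℕ → Polynomial ℝ)
    (hL0 : L (φ 0) = lam 0 • φ 0)
    (hLn : ∀ n : ℕ, 1 ≤ n → L (φ n) = lam n • φ n + nu n • φ (n - 1))
    (n : ℕ) (A : ℕ → ℝ) :
    L (∑ s ∈ range (n+1), A s • φ s) - lam n • (∑ s ∈ range (n+1), A s • φ s)
      = ∑ s ∈ range (n+1),
        ((A s * lam s + (if s < n then A (s+1) * nu (s+1) else 0) - lam n * A s) • φ s) := by
  have hL : ∀ s : ℕ, L (φ s) = lam s • φ s + (if s = 0 then 0 else nu s • φ (s-1)) := by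
    intro s
    rcases Nat.eq_zero_or_pos s with h | h
    · subst h; rw [hL0, if_pos rfl, add_zero]
    · rw [hLn s h, if_neg (Nat.pos_iff_ne_zero.mp h)]
  have e1 : L (∑ s ∈ range (n+1), A s • φ s)
      = ∑ s ∈ range (n+1), (A s * lam s) • φ s
        + ∑ s ∈ range (n+1), A s • (if s = 0 then 0 else nu s • φ (s-1)) := by
    rw [map_sum, ← Finset.sum_add_distrib]
    apply Finset.sum_congr rfl
    intro s _
    rw [map_smul, hL s, smul_add, smul_smul, mul_comm]
  have e2 : ∑ s ∈ range (n+1), A s • (if s = 0 then 0 else nu s • φ (s-1))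
      = ∑ s ∈ range (n+1), (if s < n then A (s+1) * nu (s+1) else 0) • φ s := by
    rw [Finset.sum_range_succ', Finset.sum_range_succ]
    have h0 : (A 0 • if (0:ℕ) = 0 then (0:Polynomial ℝ) else nu 0 • φ (0-1)) = 0 := by simp
    have hn : (if n < n then A (n+1) * nu (n+1) else 0) • φ n = 0 := by simp
    rw [h0, hn, add_zero, add_zero]
    apply Finset.sum_congr rfl
    intro k hk
    rw [if_neg (Nat.succ_ne_zero k), if_pos (mem_range.mp hk), smul_smul, Nat.add_sub_cancel]
  have e3 : lam n • (∑ s ∈ range (n+1), A s • φ s)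
      = ∑ s ∈ range (n+1), (lam n * A s) • φ s := by
    rw [Finset.smul_sum]
    apply Finset.sum_congr rfl
    intro s _
    rw [smul_smul]
  rw [e1, e2, e3, ← Finset.sum_add_distrib, ← Finset.sum_sub_distrib]
  apply Finset.sum_congr rfl
  intro s _
  rw [sub_smul, add_smul]

lemma rec_of_eigen (L : Polynomial ℝ →ₗ[ℝ] Polynomial ℝ) (lam nu : ℕ → ℝ)
    (φ : ℕ → Polynomial ℝ) (hdeg : ∀ k, (φ k).degree = k)
    (hL0 : L (φ 0) = lam 0 • φ 0)
    (hLn : ∀ n : ℕ, 1 ≤ n → L (φ n) = lam n • φ n + nu n • φ (n - 1))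
    (n : ℕ) (A : ℕ → ℝ) (P : Polynomial ℝ)
    (hP : P = ∑ s ∈ range (n+1), A s • φ s) (heig : L P = lam n • P) :
    ∀ s < n, A (s + 1) * nu (s + 1) = A s * (lam n - lam s) := by
  intro s hs
  have h0 : ∑ s ∈ range (n+1),
      ((A s * lam s + (if s < n then A (s+1) * nu (s+1) else 0) - lam n * A s) • φ s) = 0 := by
    rw [← key L lam nu φ hL0 hLn n A, ← hP, heig, sub_self]
  have := indep φ hdeg (n+1) _ h0 s (by omega)
  rw [if_pos hs] at this
  nlinarith [this]

lemma eigen_of_rec (L : Polynomial ℝ →ₗ[ℝ] Polynomial ℝ) (lam nu : ℕ → ℝ)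
    (φ : ℕ → Polynomial ℝ)
    (hL0 : L (φ 0) = lam 0 • φ 0)
    (hLn : ∀ n : ℕ, 1 ≤ n → L (φ n) = lam n • φ n + nu n • φ (n - 1))
    (n : ℕ) (A : ℕ → ℝ)
    (hrec : ∀ s < n, A (s + 1) * nu (s + 1) = A s * (lam n - lam s)) :
    L (∑ s ∈ range (n+1), A s • φ s) = lam n • (∑ s ∈ range (n+1), A s • φ s) := by
  rw [← sub_eq_zero, key L lam nu φ hL0 hLn n A]
  apply Finset.sum_eq_zero
  intro s hsm
  rcases lt_or_ge s n with h' | h'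
  · rw [if_pos h', hrec s h']
    have : A s * lam s + A s * (lam n - lam s) - lam n * A s = 0 := by ring
    rw [this, zero_smul]
  · have hsn : s = n := by have := mem_range.mp hsm; omega
    subst hsn
    rw [if_neg (lt_irrefl s)]
    have : A s * lam s + 0 - lam s * A s = 0 := by ring
    rw [this, zero_smul]

lemma closed_formula (lam nu : ℕ → ℝ) (hnu : ∀ j : ℕ, 1 ≤ j → nu j ≠ 0)
    (n : ℕ) (A : ℕ → ℝ)
    (hrec : ∀ s < n, A (s + 1) * nu (s + 1) = A s * (lam n - lam s)) :
    ∀ s ≤ n, A s = A 0 * (∏ j ∈ range s, (lam n - lam j)) / ∏ j ∈ range s, nu (j + 1) := by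
  intro s hs
  induction s with
  | zero => simp
  | succ s ih =>
    have hs' : s < n := by omega
    have ihs := ih (by omega)
    have hnus : nu (s+1) ≠ 0 := hnu (s+1) (by omega)
    have hprod : (∏ j ∈ range s, nu (j + 1)) ≠ 0 := by
      apply Finset.prod_ne_zero_iff.mpr
      intro j _; exact hnu (j+1) (by omega)
    have h := hrec s hs'
    rw [prod_range_succ, prod_range_succ]
    rw [ihs] at h
    field_simp at h ⊢
    linarith [h]

/-- If L is lower two-diagonal in a graded polynomial basis (φₙ), with pairwise
distinct diagonal entries λₙ and nonzero off-diagonal entries νⱼ, then for each n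
there is a unique eigenpolynomial Pₙ of degree n with the leading coefficient of
φₙ, and its expansion coefficients over the basis satisfy the stated recurrence
and product formula. -/
theorem stmt3 (L : Polynomial ℝ →ₗ[ℝ] Polynomial ℝ) (lam nu : ℕ → ℝ)
    (φ : ℕ → Polynomial ℝ)
    (hdeg : ∀ n, (φ n).degree = n)
    (hlam : ∀ m n : ℕ, m ≠ n → lam m ≠ lam n)
    (hnu : ∀ j : ℕ, 1 ≤ j → nu j ≠ 0)
    (hL0 : L (φ 0) = lam 0 • φ 0)
    (hLn : ∀ n : ℕ, 1 ≤ n → L (φ n) = lam n • φ n + nu n • φ (n - 1)) :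
    ∀ n : ℕ,
      (∃! P : Polynomial ℝ,
        P.degree = n ∧ P.leadingCoeff = (φ n).leadingCoeff ∧ L P = lam n • P) ∧
      (∀ P : Polynomial ℝ, P.degree = n → L P = lam n • P →
        ∀ A : ℕ → ℝ, P = ∑ s ∈ range (n + 1), A s • φ s →
          (∀ s < n, A (s + 1) * nu (s + 1) = A s * (lam n - lam s)) ∧
          (∀ s ≤ n, A s = A 0 * (∏ j ∈ range s, (lam n - lam j)) /
            ∏ j ∈ range s, nu (j + 1))) := by
  intro n
  have hφn0 : (φ n).coeff n ≠ 0 := coeff_ne_zero_of_eq_degree (hdeg n)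
  have hlamne : ∀ j < n, lam n - lam j ≠ 0 := fun j hj =>
    sub_ne_zero.mpr (hlam n j (by omega))
  have hnuprod : ∀ m : ℕ, (∏ j ∈ range m, nu (j+1)) ≠ 0 := by
    intro m
    exact Finset.prod_ne_zero_iff.mpr fun j _ => hnu (j+1) (by omega)
  have hlamprod : (∏ j ∈ range n, (lam n - lam j)) ≠ 0 :=
    Finset.prod_ne_zero_iff.mpr fun j hj => hlamne j (mem_range.mp hj)
  have part2 : ∀ P : Polynomial ℝ, P.degree = n → L P = lam n • P →
        ∀ A : ℕ → ℝ, P = ∑ s ∈ range (n + 1), A s • φ s →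
          (∀ s < n, A (s + 1) * nu (s + 1) = A s * (lam n - lam s)) ∧
          (∀ s ≤ n, A s = A 0 * (∏ j ∈ range s, (lam n - lam j)) /
            ∏ j ∈ range s, nu (j + 1)) := by
    intro P hPdeg heig A hA
    have hrec := rec_of_eigen L lam nu φ hdeg hL0 hLn n A P hA heig
    exact ⟨hrec, closed_formula lam nu hnu n A hrec⟩
  refine ⟨?_, part2⟩
  set A : ℕ → ℝ := fun s =>
    ((∏ j ∈ range s, (lam n - lam j)) / ∏ j ∈ range s, nu (j+1)) *
    ((∏ j ∈ range n, nu (j+1)) / ∏ j ∈ range n, (lam n - lam j)) with hAdef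
  have hAn : A n = 1 := by
    rw [hAdef]
    field_simp
    exact div_self (hnuprod n)
  have hrecA : ∀ s < n, A (s+1) * nu (s+1) = A s * (lam n - lam s) := by
    intro s hs
    simp only [hAdef]
    rw [prod_range_succ, prod_range_succ]
    have h1 := hnuprod s
    have h2 := hnu (s+1) (by omega)
    field_simp
  set P : Polynomial ℝ := ∑ s ∈ range (n+1), A s • φ s with hPdef
  have hcoeff : P.coeff n = (φ n).coeff n := by
    rw [hPdef, coeff_top φ hdeg, hAn, one_mul]
  have hdegP : P.degree = n := by
    rw [hPdef, Finset.sum_range_succ, hAn, one_smul]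
    rw [degree_add_eq_right_of_degree_lt]
    · exact hdeg n
    · rw [hdeg n]
      exact deg_sum_lt φ hdeg n A
  have hlcP : P.leadingCoeff = (φ n).leadingCoeff := by
    rw [leadingCoeff, leadingCoeff, natDegree_eq_of_degree_eq_some hdegP,
      natDegree_eq_of_degree_eq_some (hdeg n), hcoeff]
  have heigP : L P = lam n • P := eigen_of_rec L lam nu φ hL0 hLn n A hrecA
  have uniq : ∀ Q R : Polynomial ℝ,
      Q.degree = n → Q.leadingCoeff = (φ n).leadingCoeff → L Q = lam n • Q →
      R.degree = n → R.leadingCoeff = (φ n).leadingCoeff → L R = lam n • R → Q = R := by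
    intro Q R hQd hQl hQe hRd hRl hRe
    obtain ⟨B, hB⟩ := span_aux φ hdeg n Q (le_of_eq hQd)
    obtain ⟨Cc, hC⟩ := span_aux φ hdeg n R (le_of_eq hRd)
    have hQc : Q.coeff n = (φ n).coeff n := by
      have e1 : Q.coeff n = Q.leadingCoeff := by
        rw [leadingCoeff, natDegree_eq_of_degree_eq_some hQd]
      rw [e1, hQl, leadingCoeff, natDegree_eq_of_degree_eq_some (hdeg n)]
    have hRc : R.coeff n = (φ n).coeff n := by
      have e1 : R.coeff n = R.leadingCoeff := by
        rw [leadingCoeff, natDegree_eq_of_degree_eq_some hRd]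
      rw [e1, hRl, leadingCoeff, natDegree_eq_of_degree_eq_some (hdeg n)]
    have hBn : B n = 1 := by
      have h1 := coeff_top φ hdeg n B
      rw [← hB, hQc] at h1
      field_simp at h1
      tauto
    have hCn : Cc n = 1 := by
      have h1 := coeff_top φ hdeg n Cc
      rw [← hC, hRc] at h1
      field_simp at h1
      tauto
    have hrecB := rec_of_eigen L lam nu φ hdeg hL0 hLn n B Q hB hQe
    have hrecC := rec_of_eigen L lam nu φ hdeg hL0 hLn n Cc R hC hRe
    have key2 : ∀ k, k ≤ n → B (n - k) = Cc (n - k) := by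
      intro k
      induction k with
      | zero =>
        intro _
        simp only [Nat.sub_zero, hBn, hCn]
      | succ k ih =>
        intro hk
        have ihk := ih (by omega)
        have hsn : n - (k+1) < n := by omega
        have hs1 : n - (k+1) + 1 = n - k := by omega
        have h1 := hrecB (n - (k+1)) hsn
        have h2 := hrecC (n - (k+1)) hsn
        have hne := hlamne (n - (k+1)) hsn
        apply mul_right_cancel₀ hne
        rw [← h1, ← h2, hs1, ihk]
    rw [hB, hC]
    apply Finset.sum_congr rfl
    intro s hsm
    have hs : s ≤ n := by have := mem_range.mp hsm; omega
    have : B s = Cc s := by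
      have := key2 (n - s) (by omega)
      rwa [Nat.sub_sub_self hs] at this
    rw [this]
  exact ⟨P, ⟨hdegP, hlcP, heigP⟩, fun Q hQ =>
    uniq Q P hQ.1 hQ.2.1 hQ.2.2 hdegP hlcP heigP⟩
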